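/- Let θ ≥ θ* and L = L_12(θ). Then L > L_d(θ), the number θ̃ = θ − α^2/L^2 satisfies 2θ/5 < θ̃ < θ and f′(θ̃) = 0, and therefore X_m(θ, L) = θ̃. -/

import Mathlib

open Real Set
noncomputable def f (θ L X : ℝ) : ℝ :=
  if X = 0 then 0 else (θ - X) ^ (-(1:ℝ)/2) - L * X ^ 2

/-- `L_d(θ) = (25/24)·√(5/3)·θ^(-5/2)`. -/
noncomputable def Ld (θ : ℝ) : ℝ := (25/24) * Real.sqrt (5/3) * θ ^ (-(5:ℝ)/2)

/-- `θ* = (5/4)·α^(-1/2)`. -/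
noncomputable def θstar (α : ℝ) : ℝ := (5/4) * α ^ (-(1:ℝ)/2)

/-- `L_01(θ) = (5^(5/2)/16)·θ^(-5/2)`. -/
noncomputable def L01 (θ : ℝ) : ℝ := ((5:ℝ) ^ ((5:ℝ)/2) / 16) * θ ^ (-(5:ℝ)/2)

/-- `L_02(θ) = α^(5/4)·(√α·θ - 1)^(-1/2)`. -/
noncomputable def L02 (α θ : ℝ) : ℝ := α ^ ((5:ℝ)/4) * (Real.sqrt α * θ - 1) ^ (-(1:ℝ)/2)

/-- `L_12(θ) = (2α³θ + 2α²√(α(αθ² - 1)))^(1/2)`. -/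
noncomputable def L12 (α θ : ℝ) : ℝ :=
  Real.sqrt (2*α^3*θ + 2*α^2 * Real.sqrt (α*(α*θ^2 - 1)))

/-- For `θ ≥ θ*` and `L = L_12(θ)`: `L > L_d(θ)`, the number `θ̃ = θ - α²/L²`
satisfies `2θ/5 < θ̃ < θ` and `f'(θ̃) = 0`, hence `X_m(θ, L) = θ̃` (it satisfies the
critical-point equation and is the unique critical point in `(2θ/5, θ)`). -/

lemma rpow_neg_three_halves {a : ℝ} (ha : 0 < a) :
    a ^ (-(3:ℝ)/2) = (a * Real.sqrt a)⁻¹ := by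
  rw [show (-(3:ℝ)/2) = -((3:ℝ)/2) by norm_num, Real.rpow_neg ha.le]
  congr 1
  rw [show (3:ℝ)/2 = 1 + 1/2 by norm_num, Real.rpow_add ha, Real.rpow_one,
    ← Real.sqrt_eq_rpow]

lemma crit_sq {θ L X : ℝ} (ht : 0 < θ - X)
    (h : (1/2) * (θ - X) ^ (-(3:ℝ)/2) = 2 * L * X) :
    16 * L^2 * X^2 * (θ - X)^3 = 1 := by
  set t := θ - X with htdef
  rw [rpow_neg_three_halves ht] at h
  have hs : 0 < Real.sqrt t := Real.sqrt_pos.2 ht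
  have h1 : 4 * L * X * (t * Real.sqrt t) = 1 := by
    field_simp at h
    nlinarith [mul_pos ht hs]
  have h2 : (4 * L * X * (t * Real.sqrt t))^2 = 1 := by rw [h1]; norm_num
  have h3 : Real.sqrt t ^ 2 = t := Real.sq_sqrt ht.le
  linear_combination h2 - 16 * L^2 * X^2 * t^2 * h3

lemma p_strictAnti {θ : ℝ} (hθ : 0 < θ) :
    StrictAntiOn (fun t : ℝ => t^2 * (θ - t)^3) (Icc (2*θ/5) θ) := by
  apply strictAntiOn_of_deriv_neg (convex_Icc _ _)
  · exact Continuous.continuousOn (by continuity)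
  · intro x hx
    rw [interior_Icc] at hx
    obtain ⟨hx1, hx2⟩ := hx
    have hD : HasDerivAt (fun t : ℝ => t^2 * (θ - t)^3)
        ((2 * x ^ 1) * (θ - x)^3 + x^2 * (3 * (θ - x) ^ 2 * (0 - 1))) x := by
      have h1 : HasDerivAt (fun t : ℝ => t^2) (2 * x ^ 1) x := by
        simpa using hasDerivAt_pow 2 x
      have h2 : HasDerivAt (fun t : ℝ => (θ - t)^3) (3 * (θ - x) ^ 2 * (0 - 1)) x := by
        have hsub : HasDerivAt (fun t : ℝ => θ - t) (0 - 1) x :=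
          (hasDerivAt_const x θ).sub (hasDerivAt_id x)
        exact ((hasDerivAt_pow 3 (θ - x)).comp x hsub).congr_deriv (by norm_num)
      exact h1.mul h2
    rw [hD.deriv]
    have hx0 : 0 < x := lt_trans (by linarith) hx1
    nlinarith [mul_pos (mul_pos hx0 (pow_pos (by linarith : (0:ℝ) < θ - x) 2))
      (by linarith : (0:ℝ) < 5*x - 2*θ)]

theorem stmt_9 (α θ L : ℝ) (hα : 0 < α) (hθ : θstar α ≤ θ) (hL : L = L12 α θ) :
    Ld θ < L ∧
    2*θ/5 < θ - α^2/L^2 ∧ θ - α^2/L^2 < θ ∧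
    deriv (f θ L) (θ - α^2/L^2) = 0 ∧
    (1/2) * (θ - (θ - α^2/L^2)) ^ (-(3:ℝ)/2) = 2 * L * (θ - α^2/L^2) ∧
    (∀ X ∈ Ioo (2*θ/5) θ, (1/2) * (θ - X) ^ (-(3:ℝ)/2) = 2 * L * X →
      X = θ - α^2/L^2) := by
  have hsα : 0 < Real.sqrt α := Real.sqrt_pos.2 hα
  have hsα2 : Real.sqrt α ^ 2 = α := Real.sq_sqrt hα.le
  have hθ' : (5/4) * (Real.sqrt α)⁻¹ ≤ θ := by
    rw [θstar, show (-(1:ℝ)/2) = -((1:ℝ)/2) by norm_num, Real.rpow_neg hα.le,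
      show ((1:ℝ)/2) = 1/2 by norm_num, ← Real.sqrt_eq_rpow] at hθ
    exact hθ
  have hθpos : 0 < θ := lt_of_lt_of_le (by positivity) hθ'
  have hαθ2 : 25/16 ≤ α * θ^2 := by
    have h1 : 5/4 ≤ θ * Real.sqrt α := by
      have h := mul_le_mul_of_nonneg_right hθ' hsα.le
      rw [mul_assoc, inv_mul_cancel₀ hsα.ne', mul_one] at h
      exact h
    nlinarith
  set s := Real.sqrt (α * (α * θ^2 - 1)) with hsdef
  have hs0 : 0 ≤ s := Real.sqrt_nonneg _
  have hs2 : s^2 = α * (α * θ^2 - 1) := Real.sq_sqrt (by nlinarith)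
  have hL2 : L^2 = 2*α^3*θ + 2*α^2 * s := by
    rw [hL, L12, ← hsdef, sq, Real.mul_self_sqrt (by positivity)]
  have hLpos : 0 < L := by
    rw [hL, L12]
    exact Real.sqrt_pos.2 (by positivity)
  have hL4 : L^4 = 4*α^3*θ*L^2 - 4*α^5 := by
    linear_combination (L^2 - 2*α^3*θ + 2*α^2*s) * hL2 + 4*α^4 * hs2
  -- θ̃ bounds
  have hT2 : 2*θ/5 < θ - α^2/L^2 := by
    have h5 : α^2/L^2 < 3*θ/5 := by
      rw [div_lt_iff₀ (by positivity)]
      nlinarith [mul_le_mul_of_nonneg_left hαθ2 (mul_pos hα hα).le,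
        mul_nonneg (mul_nonneg hθpos.le (sq_nonneg α)) hs0, pow_pos hα 2]
    linarith
  have hT1 : θ - α^2/L^2 < θ := by
    have : 0 < α^2/L^2 := by positivity
    linarith
  have hTd : 0 < θ - (θ - α^2/L^2) := by linarith
  have hTpos : 0 < θ - α^2/L^2 := by linarith
  -- L² = 4α³ θ̃
  have hL2T : L^2 = 4*α^3*(θ - α^2/L^2) := by
    have h : L^2 * L^2 = (4*α^3*(θ - α^2/L^2)) * L^2 := by
      field_simp
      linear_combination hL4
    exact mul_right_cancel₀ (pow_ne_zero 2 hLpos.ne') h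
  have hTeq : θ - α^2/L^2 = L^2/(4*α^3) := by
    rw [eq_div_iff (by positivity : (4*α^3:ℝ) ≠ 0)]
    linear_combination -hL2T
  -- the critical equation at θ̃
  have hEq : (1/2) * (θ - (θ - α^2/L^2)) ^ (-(3:ℝ)/2) = 2 * L * (θ - α^2/L^2) := by
    have ha : 0 < α^2/L^2 := by positivity
    rw [show θ - (θ - α^2/L^2) = α^2/L^2 by ring, rpow_neg_three_halves ha]
    have hsq : Real.sqrt (α^2/L^2) = α/L := by
      rw [show α^2/L^2 = (α/L)^2 by ring, Real.sqrt_sq (by positivity)]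
    rw [hsq, hTeq]
    field_simp
    ring
  -- Ld < L
  have hLd : Ld θ < L := by
    have hu : (0:ℝ) < θ ^ (-(5:ℝ)/2) := Real.rpow_pos_of_pos hθpos _
    have hu2 : (θ ^ (-(5:ℝ)/2))^2 = (θ^5)⁻¹ := by
      rw [← Real.rpow_natCast (θ ^ (-(5:ℝ)/2)) 2, ← Real.rpow_mul hθpos.le]
      norm_num
    have hLdpos : 0 < Ld θ := by
      rw [Ld]
      have : (0:ℝ) < Real.sqrt (5/3) := Real.sqrt_pos.2 (by norm_num)
      positivity
    have hs53 : Real.sqrt (5/3) ^ 2 = 5/3 := Real.sq_sqrt (by norm_num)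
    have hLd2 : (Ld θ)^2 = 3125/1728 * (θ^5)⁻¹ := by
      rw [Ld, mul_pow, mul_pow, hs53, hu2]
      norm_num
    have hcube : (25/16:ℝ)^3 ≤ (α*θ^2)^3 := pow_le_pow_left₀ (by norm_num) hαθ2 3
    have key : 15625/2048 ≤ 2*α^3*θ * θ^5 := by nlinarith [hcube]
    have h1 : 15625/2048 * (θ^5)⁻¹ ≤ 2*α^3*θ := by
      rw [← div_eq_mul_inv]
      exact (div_le_iff₀ (pow_pos hθpos 5)).2 key
    have hL2big : 15625/2048 * (θ^5)⁻¹ ≤ L^2 := by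
      linarith [h1, hL2, mul_nonneg (sq_nonneg α) hs0]
    have hsq : (Ld θ)^2 < L^2 := by
      have : (3125/1728:ℝ) * (θ^5)⁻¹ < 15625/2048 * (θ^5)⁻¹ :=
        mul_lt_mul_of_pos_right (by norm_num) (by positivity)
      linarith [hLd2, hL2big]
    exact lt_of_pow_lt_pow_left₀ 2 hLpos.le hsq
  -- derivative
  have hne0 : θ - α^2/L^2 ≠ 0 := ne_of_gt hTpos
  have hfg : f θ L =ᶠ[nhds (θ - α^2/L^2)] fun X => (θ - X) ^ (-(1:ℝ)/2) - L * X^2 := by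
    filter_upwards [compl_singleton_mem_nhds hne0] with x hx
    simp only [mem_compl_iff, mem_singleton_iff] at hx
    simp [f, hx]
  have hderiv : deriv (f θ L) (θ - α^2/L^2) = 0 := by
    rw [hfg.deriv_eq]
    have h1 : HasDerivAt (fun X : ℝ => θ - X) (0 - 1) (θ - α^2/L^2) :=
      (hasDerivAt_const _ θ).sub (hasDerivAt_id _)
    have h2 := h1.rpow_const (p := -(1:ℝ)/2) (Or.inl (ne_of_gt hTd))
    have h3 : HasDerivAt (fun X : ℝ => L * X^2) (L * (2 * (θ - α^2/L^2) ^ 1))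
        (θ - α^2/L^2) := (hasDerivAt_pow 2 _).const_mul L
    have h4 : HasDerivAt (fun X : ℝ => (θ - X) ^ (-(1:ℝ)/2) - L * X^2) _ _ := h2.sub h3
    rw [h4.deriv]
    have hexp : (-(1:ℝ)/2 - 1) = -(3:ℝ)/2 := by norm_num
    rw [hexp]
    rw [show (0 - 1 : ℝ) * (-(1:ℝ)/2) * (θ - (θ - α^2/L^2)) ^ (-(3:ℝ)/2)
      = (1/2) * (θ - (θ - α^2/L^2)) ^ (-(3:ℝ)/2) by ring]
    rw [hEq]; ring
  refine ⟨hLd, hT2, hT1, hderiv, hEq, ?_⟩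
  intro X hX hcrit
  have hXt : 0 < θ - X := by linarith [hX.2]
  have hp1 : 16 * L^2 * X^2 * (θ - X)^3 = 1 := crit_sq hXt hcrit
  have hp2 : 16 * L^2 * (θ - α^2/L^2)^2 * (θ - (θ - α^2/L^2))^3 = 1 := crit_sq hTd hEq
  have hpeq : X^2 * (θ - X)^3 = (θ - α^2/L^2)^2 * (θ - (θ - α^2/L^2))^3 := by
    have h16 : (16*L^2 : ℝ) ≠ 0 := by positivity
    apply mul_left_cancel₀ h16
    linear_combination hp1 - hp2
  exact (p_strictAnti hθpos).injOn (Ioo_subset_Icc_self hX)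
    ⟨le_of_lt hT2, le_of_lt hT1⟩ hpeq
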